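/- For TFG elements χ₁, χ₂, the adjoint matrices satisfy Ad_{χ₁ • χ₂} = Ad_{χ₁} Ad_{χ₂}, where Ad_{(R,v,p,b)} is the block matrix with diagonal blocks R and first block column (R; (v)× R; (p)× R; R(b)×). -/

import Mathlib

open Matrix

noncomputable section

abbrev V3 := Fin 3 → ℝ
abbrev M3 := Matrix (Fin 3) (Fin 3) ℝ

/-- The skew-symmetric cross-product matrix `(ξ)×`. -/
def skew (ξ : V3) : M3 :=
  !![0, -ξ 2, ξ 1; ξ 2, 0, -ξ 0; -ξ 1, ξ 0, 0]

/-- The Euclidean norm of a vector of `ℝ³`. -/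
def nrm (ξ : V3) : ℝ := Real.sqrt (ξ 0 ^ 2 + ξ 1 ^ 2 + ξ 2 ^ 2)

/-- The left Jacobian of SO(3):
`ν(ξ) = I + ((1−cos‖ξ‖)/‖ξ‖²)(ξ)× + ((‖ξ‖−sin‖ξ‖)/‖ξ‖³)(ξ)ײ`. -/
def nu (ξ : V3) : M3 :=
  1 + ((1 - Real.cos (nrm ξ)) / nrm ξ ^ 2) • skew ξ
    + ((nrm ξ - Real.sin (nrm ξ)) / nrm ξ ^ 3) • (skew ξ * skew ξ)

/-- `R` is a rotation matrix: orthogonal with determinant one. -/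
def IsSO3 (R : M3) : Prop := R * Rᵀ = 1 ∧ R.det = 1

/-- An element of the Two-Frames Group: `(R, v, p, b)`. -/
abbrev TFGel := M3 × V3 × V3 × V3

/-- The TFG composition law. -/
def tmul (x y : TFGel) : TFGel :=
  (x.1 * y.1, x.2.1 + x.1 *ᵥ y.2.1, x.2.2.1 + x.1 *ᵥ y.2.2.1,
    y.2.2.2 + y.1ᵀ *ᵥ x.2.2.2)

/-- The adjoint of `(R,v,p,b)`, as the action on `ℝ¹² = ℝ³ × ℝ³ × ℝ³ × ℝ³` of the
block matrix with diagonal blocks `R` and first block column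
`(R; (v)× R; (p)× R; R (b)×)`, all other blocks zero. -/
def adAct (x : TFGel) (ξ : V3 × V3 × V3 × V3) : V3 × V3 × V3 × V3 :=
  (x.1 *ᵥ ξ.1,
    skew x.2.1 *ᵥ (x.1 *ᵥ ξ.1) + x.1 *ᵥ ξ.2.1,
    skew x.2.2.1 *ᵥ (x.1 *ᵥ ξ.1) + x.1 *ᵥ ξ.2.2.1,
    x.1 *ᵥ (skew x.2.2.2 *ᵥ ξ.1) + x.1 *ᵥ ξ.2.2.2)

lemma skew_add (a b : V3) : skew (a + b) = skew a + skew b := by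
  ext i j
  fin_cases i <;> fin_cases j <;> simp [skew] <;> ring

lemma skew_mulVec_comm (R : M3) (hR : IsSO3 R) (v : V3) :
    skew (R *ᵥ v) * R = R * skew v := by
  obtain ⟨ho, hd⟩ := hR
  have hadj : R.adjugate = Rᵀ := by
    have h1 : R * R.adjugate = 1 := by rw [Matrix.mul_adjugate, hd, one_smul]
    have hinv : Invertible R := invertibleOfRightInverse R _ ho
    calc R.adjugate = R⁻¹ * (R * R.adjugate) := by
          rw [Matrix.inv_mul_cancel_left_of_invertible]
    _ = R⁻¹ * (R * Rᵀ) := by rw [h1, ho]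
    _ = Rᵀ := by rw [Matrix.inv_mul_cancel_left_of_invertible]
  have c : ∀ a b, R.adjugate a b = R b a := fun a b => by
    rw [hadj, Matrix.transpose_apply]
  have c00 : R 1 1 * R 2 2 - R 1 2 * R 2 1 = R 0 0 := by
    simpa [Matrix.adjugate_fin_three] using c 0 0
  have c01 : -(R 0 1 * R 2 2) + R 0 2 * R 2 1 = R 1 0 := by
    simpa [Matrix.adjugate_fin_three] using c 0 1
  have c02 : R 0 1 * R 1 2 - R 0 2 * R 1 1 = R 2 0 := by
    simpa [Matrix.adjugate_fin_three] using c 0 2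
  have c10 : -(R 1 0 * R 2 2) + R 1 2 * R 2 0 = R 0 1 := by
    simpa [Matrix.adjugate_fin_three] using c 1 0
  have c11 : R 0 0 * R 2 2 - R 0 2 * R 2 0 = R 1 1 := by
    simpa [Matrix.adjugate_fin_three] using c 1 1
  have c12 : -(R 0 0 * R 1 2) + R 0 2 * R 1 0 = R 2 1 := by
    simpa [Matrix.adjugate_fin_three] using c 1 2
  have c20 : R 1 0 * R 2 1 - R 1 1 * R 2 0 = R 0 2 := by
    simpa [Matrix.adjugate_fin_three] using c 2 0
  have c21 : -(R 0 0 * R 2 1) + R 0 1 * R 2 0 = R 1 2 := by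
    simpa [Matrix.adjugate_fin_three] using c 2 1
  have c22 : R 0 0 * R 1 1 - R 0 1 * R 1 0 = R 2 2 := by
    simpa [Matrix.adjugate_fin_three] using c 2 2
  ext i j
  fin_cases i <;> fin_cases j <;>
    simp [skew, Matrix.mul_apply, Matrix.mulVec, dotProduct, Fin.sum_univ_three]
  · linear_combination v 2 * c10 - v 1 * c20
  · linear_combination v 0 * c20 - v 2 * c00
  · linear_combination v 1 * c00 - v 0 * c10
  · linear_combination v 2 * c11 - v 1 * c21
  · linear_combination v 0 * c21 - v 2 * c01
  · linear_combination v 1 * c01 - v 0 * c11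
  · linear_combination v 2 * c12 - v 1 * c22
  · linear_combination v 0 * c22 - v 2 * c02
  · linear_combination v 1 * c02 - v 0 * c12

lemma skew_mulVec_mulVec (R : M3) (hR : IsSO3 R) (v w : V3) :
    skew (R *ᵥ v) *ᵥ (R *ᵥ w) = R *ᵥ (skew v *ᵥ w) := by
  rw [Matrix.mulVec_mulVec, Matrix.mulVec_mulVec, skew_mulVec_comm R hR v]

/-- The TFG adjoint matrices satisfy `Ad_{χ₁ • χ₂} = Ad_{χ₁} Ad_{χ₂}`. -/
theorem adAct_tmul (x y : TFGel) (hx : IsSO3 x.1) (hy : IsSO3 y.1) :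
    ∀ ξ : V3 × V3 × V3 × V3, adAct (tmul x y) ξ = adAct x (adAct y ξ) := by
  intro ξ
  have key2 := skew_mulVec_mulVec x.1 hx y.2.1 (y.1 *ᵥ ξ.1)
  have key3 := skew_mulVec_mulVec x.1 hx y.2.2.1 (y.1 *ᵥ ξ.1)
  have hxb : y.1 *ᵥ (y.1ᵀ *ᵥ x.2.2.2) = x.2.2.2 := by
    rw [Matrix.mulVec_mulVec, hy.1, Matrix.one_mulVec]
  have key4 := skew_mulVec_mulVec y.1 hy (y.1ᵀ *ᵥ x.2.2.2) ξ.1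
  rw [hxb] at key4
  simp only [adAct, tmul, Prod.mk.injEq]
  refine ⟨?_, ?_, ?_, ?_⟩
  · rw [Matrix.mulVec_mulVec]
  · rw [skew_add, Matrix.add_mulVec, ← Matrix.mulVec_mulVec _ x.1 y.1,
      key2, Matrix.mulVec_add, ← Matrix.mulVec_mulVec _ x.1 y.1]
    abel
  · rw [skew_add, Matrix.add_mulVec, ← Matrix.mulVec_mulVec _ x.1 y.1,
      key3, Matrix.mulVec_add, ← Matrix.mulVec_mulVec _ x.1 y.1]
    abel
  · rw [skew_add, Matrix.add_mulVec, ← Matrix.mulVec_mulVec _ x.1 y.1,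
      Matrix.mulVec_add, Matrix.mulVec_add, ← key4, ← Matrix.mulVec_mulVec _ x.1 y.1,
      Matrix.mulVec_add]
    abel
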